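/- Let X be a set of density matrices on n qudits, and let E be any finite composition of deletion and insertion error operations E = I^{t_1}∘D^{s_1}∘⋯∘I^{t_k}∘D^{s_k} with Σ s_i = s and Σ t_i = t. Then E(X) ⊆ I^t(D^s(X)). -/

import Mathlib

open Matrix
open scoped ComplexOrder

/-- Matrices on `n` qudits of level `l`. -/
abbrev QMat (l n : ℕ) := Matrix (Fin n → Fin l) (Fin n → Fin l) ℂ

/-- A quantum state on some finite number of qudits. -/
def QState (l : ℕ) := Σ n : ℕ, QMat l n

/-- Density matrix: positive semidefinite with trace 1. -/
def IsDensity {l n : ℕ} (ρ : QMat l n) : Prop := ρ.PosSemidef ∧ ρ.trace = 1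

def IsDensityS {l : ℕ} (ρ : QState l) : Prop := ρ.2.PosSemidef ∧ ρ.2.trace = 1

/-- Partial trace over the qudit at position `p`. -/
noncomputable def traceOut {l n : ℕ} (p : Fin (n + 1)) (ρ : QMat l (n + 1)) : QMat l n :=
  fun x y => ∑ z : Fin l, ρ (p.insertNth z x) (p.insertNth z y)

/-- Single deletion: all states obtained by tracing out one qudit. -/
def del1 {l : ℕ} : QState l → Set (QState l)
  | ⟨0, _⟩ => ∅
  | ⟨n + 1, ρ⟩ => { σ | ∃ p : Fin (n + 1), σ = ⟨n, traceOut p ρ⟩ }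

/-- Single insertion sphere: density matrices having `ρ` among their single deletions. -/
def ins1 {l : ℕ} (ρ : QState l) : Set (QState l) :=
  { σ | IsDensityS σ ∧ ρ ∈ del1 σ }

def delSet {l : ℕ} (X : Set (QState l)) : Set (QState l) := ⋃ ρ ∈ X, del1 ρ
def insSet {l : ℕ} (X : Set (QState l)) : Set (QState l) := ⋃ ρ ∈ X, ins1 ρ

/-- `s`-deletion errors. -/
def Dq {l : ℕ} : ℕ → Set (QState l) → Set (QState l)
  | 0, X => X
  | s + 1, X => delSet (Dq s X)

/-- `t`-insertion errors. -/
def Iq {l : ℕ} : ℕ → Set (QState l) → Set (QState l)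
  | 0, X => X
  | t + 1, X => insSet (Iq t X)

/-- Quantum indel distance. -/
noncomputable def qdist {l : ℕ} (ρ₁ ρ₂ : QState l) : ℕ :=
  sInf { k | ∃ s t : ℕ, s + t = k ∧ (Dq s {ρ₁} ∩ Dq t {ρ₂}).Nonempty }

/-- The composite error `I^{t₁}∘D^{s₁}∘⋯∘I^{t_k}∘D^{s_k}` applied to `X`
(rightmost factor first). -/
def compDI {l : ℕ} (L : List (ℕ × ℕ)) (X : Set (QState l)) : Set (QState l) :=
  L.foldr (fun st Y => Iq st.2 (Dq st.1 Y)) X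

section AuxCombinatorics

lemma succAbove_succAbove_comm {m : ℕ} (p : Fin (m + 2)) (j i : Fin (m + 1))
    (hp : (p.succAbove j).succAbove i = p) :
    (fun k : Fin m => p.succAbove (j.succAbove k))
      = fun k => (p.succAbove j).succAbove (i.succAbove k) := by
  set q := p.succAbove j with hq
  have h1 : StrictMono (fun k : Fin m => p.succAbove (j.succAbove k)) :=
    (Fin.strictMono_succAbove p).comp (Fin.strictMono_succAbove j)
  have h2 : StrictMono (fun k : Fin m => q.succAbove (i.succAbove k)) :=
    (Fin.strictMono_succAbove q).comp (Fin.strictMono_succAbove i)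
  refine (h1.range_inj h2).1 ?_
  have e1 : Set.range (fun k : Fin m => p.succAbove (j.succAbove k))
      = p.succAbove '' (Set.range j.succAbove) := by
    rw [← Set.range_comp]; rfl
  have e2 : Set.range (fun k : Fin m => q.succAbove (i.succAbove k))
      = q.succAbove '' (Set.range i.succAbove) := by
    rw [← Set.range_comp]; rfl
  rw [e1, e2, Fin.range_succAbove, Fin.range_succAbove]
  have hinj_p := Fin.succAbove_right_injective (p := p)
  have hinj_q := Fin.succAbove_right_injective (p := q)
  have i1 : p.succAbove '' ({j}ᶜ) = Set.range p.succAbove \ {q} := by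
    rw [show ({j}ᶜ : Set (Fin (m+1))) = Set.univ \ {j} by ext; simp,
      Set.image_diff hinj_p, Set.image_univ, Set.image_singleton]
  have i2 : q.succAbove '' ({i}ᶜ) = Set.range q.succAbove \ {p} := by
    rw [show ({i}ᶜ : Set (Fin (m+1))) = Set.univ \ {i} by ext; simp,
      Set.image_diff hinj_q, Set.image_univ, Set.image_singleton, hp]
  rw [i1, i2, Fin.range_succAbove, Fin.range_succAbove]
  have hqp : q ≠ p := Fin.succAbove_ne p j
  ext r
  simp only [Set.mem_diff, Set.mem_compl_iff, Set.mem_singleton_iff]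
  tauto

lemma insertNth_insertNth_comm {l m : ℕ} (p : Fin (m + 2)) (j i : Fin (m + 1))
    (hp : (p.succAbove j).succAbove i = p) (z z' : Fin l) (x : Fin m → Fin l) :
    Fin.insertNth (α := fun _ => Fin l) p z (Fin.insertNth (α := fun _ => Fin l) j z' x)
      = Fin.insertNth (α := fun _ => Fin l) (p.succAbove j) z'
          (Fin.insertNth (α := fun _ => Fin l) i z x) := by
  set q := p.succAbove j with hq
  funext r
  rcases eq_or_ne r p with rfl | hrp
  · rw [Fin.insertNth_apply_same, ← hp, Fin.insertNth_apply_succAbove,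
      Fin.insertNth_apply_same]
  · obtain ⟨k, rfl⟩ := Fin.exists_succAbove_eq hrp
    rw [Fin.insertNth_apply_succAbove]
    rcases eq_or_ne k j with rfl | hkj
    · rw [Fin.insertNth_apply_same, ← hq, Fin.insertNth_apply_same]
    · obtain ⟨k', rfl⟩ := Fin.exists_succAbove_eq hkj
      rw [Fin.insertNth_apply_succAbove,
        congrFun (succAbove_succAbove_comm p j i hp) k',
        Fin.insertNth_apply_succAbove, Fin.insertNth_apply_succAbove]

end AuxCombinatorics
section AuxAnalytic

variable {l n : ℕ}

lemma sum_insertNth (p : Fin (n + 1)) (f : (Fin (n + 1) → Fin l) → ℂ) :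
    (∑ u, f u) = ∑ z : Fin l, ∑ x : Fin n → Fin l, f (p.insertNth z x) := by
  rw [← Equiv.sum_comp (Fin.insertNthEquiv (fun _ : Fin (n + 1) => Fin l) p) f,
    Fintype.sum_prod_type]
  rfl

lemma trace_traceOut (p : Fin (n + 1)) (ρ : QMat l (n + 1)) :
    (traceOut p ρ).trace = ρ.trace := by
  classical
  unfold Matrix.trace traceOut
  simp only [Matrix.diag_apply]
  rw [sum_insertNth p (fun u => ρ u u), Finset.sum_comm]
  rfl

lemma traceOut_isHermitian (p : Fin (n + 1)) {ρ : QMat l (n + 1)}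
    (h : ρ.IsHermitian) : (traceOut p ρ).IsHermitian := by
  ext x y
  simp only [Matrix.conjTranspose_apply, traceOut, star_sum]
  exact Finset.sum_congr rfl fun z _ => h.apply _ _

lemma traceOut_posSemidef (p : Fin (n + 1)) {ρ : QMat l (n + 1)}
    (h : ρ.PosSemidef) : (traceOut p ρ).PosSemidef := by
  classical
  refine Matrix.PosSemidef.of_dotProduct_mulVec_nonneg (traceOut_isHermitian p h.1) fun v => ?_
  set w : Fin l → (Fin (n + 1) → Fin l) → ℂ :=
    fun z u => if u p = z then v (p.removeNth u) else 0 with hw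
  have hwz : ∀ (z z₁ : Fin l) (x : Fin n → Fin l),
      w z (p.insertNth z₁ x) = if z₁ = z then v x else 0 := by
    intro z z₁ x
    simp [hw, Fin.insertNth_apply_same, Fin.removeNth_insertNth]
  have quad : ∀ z : Fin l, star (w z) ⬝ᵥ ρ *ᵥ (w z)
      = ∑ x, ∑ y, star (v x) * (ρ (p.insertNth z x) (p.insertNth z y) * v y) := by
    intro z
    have inner : ∀ u, (∑ u', ρ u u' * w z u') = ∑ y, ρ u (p.insertNth z y) * v y := by
      intro u
      rw [sum_insertNth p (fun u' => ρ u u' * w z u')]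
      rw [Finset.sum_eq_single z]
      · exact Finset.sum_congr rfl fun y _ => by rw [hwz]; simp
      · intro b _ hb
        exact Finset.sum_eq_zero fun y _ => by rw [hwz]; simp [hb]
      · intro hz; exact absurd (Finset.mem_univ z) hz
    simp only [dotProduct, Matrix.mulVec, Pi.star_apply]
    rw [sum_insertNth p (fun u => star (w z u) * ∑ u', ρ u u' * w z u')]
    rw [Finset.sum_eq_single z]
    · refine Finset.sum_congr rfl fun x _ => ?_
      rw [inner, hwz]
      simp [Finset.mul_sum]
    · intro b _ hb
      refine Finset.sum_eq_zero fun x _ => ?_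
      rw [hwz]
      simp [hb]
    · intro hz; exact absurd (Finset.mem_univ z) hz
  have key : star v ⬝ᵥ (traceOut p ρ) *ᵥ v
      = ∑ z : Fin l, ∑ x, ∑ y,
          star (v x) * (ρ (p.insertNth z x) (p.insertNth z y) * v y) := by
    simp only [dotProduct, Matrix.mulVec, Pi.star_apply, traceOut,
      Finset.sum_mul, Finset.mul_sum]
    rw [show (∑ x, ∑ y, ∑ z : Fin l,
        star (v x) * (ρ (p.insertNth z x) (p.insertNth z y) * v y))
      = ∑ x, ∑ z : Fin l, ∑ y,
        star (v x) * (ρ (p.insertNth z x) (p.insertNth z y) * v y) from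
      Finset.sum_congr rfl fun x _ => Finset.sum_comm, Finset.sum_comm]
  rw [key]
  refine Finset.sum_nonneg fun z _ => ?_
  have h0 := h.dotProduct_mulVec_nonneg (w z)
  rwa [quad z] at h0

end AuxAnalytic
section AuxSets

variable {l : ℕ}

lemma traceOut_traceOut_comm {m : ℕ} (p : Fin (m + 2)) (j i : Fin (m + 1))
    (hp : (p.succAbove j).succAbove i = p) (σ : QMat l (m + 2)) :
    traceOut j (traceOut p σ) = traceOut i (traceOut (p.succAbove j) σ) := by
  funext x y
  unfold traceOut
  rw [Finset.sum_comm]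
  refine Finset.sum_congr rfl fun z _ => Finset.sum_congr rfl fun z' _ => ?_
  rw [insertNth_insertNth_comm p j i hp z z' x, insertNth_insertNth_comm p j i hp z z' y]

lemma isDensityS_mk {n : ℕ} {M : QMat l n} :
    IsDensityS (⟨n, M⟩ : QState l) ↔ (M.PosSemidef ∧ M.trace = 1) := Iff.rfl

lemma isDensityS_traceOut {n : ℕ} (p : Fin (n + 1)) {M : QMat l (n + 1)}
    (h : IsDensityS (⟨n + 1, M⟩ : QState l)) :
    IsDensityS (⟨n, traceOut p M⟩ : QState l) :=
  ⟨traceOut_posSemidef p h.1, (trace_traceOut p M).trans h.2⟩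

lemma mem_del1 {σ ρ : QState l} (h : σ ∈ del1 ρ) :
    ρ.1 = σ.1 + 1 ∧ (IsDensityS ρ → IsDensityS σ) := by
  obtain ⟨m, M⟩ := ρ
  cases m with
  | zero => exact absurd h (by simp [del1])
  | succ m =>
    obtain ⟨p, rfl⟩ := h
    exact ⟨rfl, fun hd => isDensityS_traceOut p hd⟩

lemma del1_comm {σ ρ τ : QState l} (hρ : ρ ∈ del1 σ) (hτ : τ ∈ del1 σ) :
    τ = ρ ∨ ∃ τ', τ' ∈ del1 ρ ∧ τ' ∈ del1 τ := by
  obtain ⟨m, M⟩ := σ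
  cases m with
  | zero => exact absurd hρ (by simp [del1])
  | succ m =>
    obtain ⟨p, rfl⟩ := hρ
    obtain ⟨q, rfl⟩ := hτ
    rcases eq_or_ne q p with rfl | hqp
    · exact Or.inl rfl
    · cases m with
      | zero => exact absurd (Fin.ext (by omega)) hqp
      | succ m =>
        right
        obtain ⟨j, hj⟩ := Fin.exists_succAbove_eq hqp
        obtain ⟨i, hi⟩ := Fin.exists_succAbove_eq (Ne.symm hqp)
        refine ⟨⟨m, traceOut j (traceOut p M)⟩, ⟨j, rfl⟩, ⟨i, ?_⟩⟩
        rw [traceOut_traceOut_comm p j i (by rw [hj]; exact hi) M, hj]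

@[simp] lemma Dq_zero (X : Set (QState l)) : Dq 0 X = X := rfl
@[simp] lemma Dq_succ (s : ℕ) (X : Set (QState l)) : Dq (s + 1) X = delSet (Dq s X) := rfl
@[simp] lemma Iq_zero (X : Set (QState l)) : Iq 0 X = X := rfl
@[simp] lemma Iq_succ (t : ℕ) (X : Set (QState l)) : Iq (t + 1) X = insSet (Iq t X) := rfl

lemma mem_delSet {σ : QState l} {X : Set (QState l)} :
    σ ∈ delSet X ↔ ∃ ρ ∈ X, σ ∈ del1 ρ := by simp [delSet]

lemma mem_insSet {σ : QState l} {X : Set (QState l)} :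
    σ ∈ insSet X ↔ ∃ ρ ∈ X, σ ∈ ins1 ρ := by simp [insSet]

lemma delSet_mono {X Y : Set (QState l)} (h : X ⊆ Y) : delSet X ⊆ delSet Y := by
  intro σ hσ
  obtain ⟨ρ, hρ, hσ⟩ := mem_delSet.1 hσ
  exact mem_delSet.2 ⟨ρ, h hρ, hσ⟩

lemma insSet_mono {X Y : Set (QState l)} (h : X ⊆ Y) : insSet X ⊆ insSet Y := by
  intro σ hσ
  obtain ⟨ρ, hρ, hσ⟩ := mem_insSet.1 hσ
  exact mem_insSet.2 ⟨ρ, h hρ, hσ⟩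

lemma Dq_mono (s : ℕ) {X Y : Set (QState l)} (h : X ⊆ Y) : Dq s X ⊆ Dq s Y := by
  induction s with
  | zero => exact h
  | succ s ih => exact delSet_mono ih

lemma Iq_mono (t : ℕ) {X Y : Set (QState l)} (h : X ⊆ Y) : Iq t X ⊆ Iq t Y := by
  induction t with
  | zero => exact h
  | succ t ih => exact insSet_mono ih

lemma delSet_union (X Y : Set (QState l)) : delSet (X ∪ Y) = delSet X ∪ delSet Y := by
  ext σ
  simp only [mem_delSet, Set.mem_union]
  constructor
  · rintro ⟨ρ, hρ | hρ, hσ⟩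
    · exact Or.inl ⟨ρ, hρ, hσ⟩
    · exact Or.inr ⟨ρ, hρ, hσ⟩
  · rintro (⟨ρ, hρ, hσ⟩ | ⟨ρ, hρ, hσ⟩)
    · exact ⟨ρ, Or.inl hρ, hσ⟩
    · exact ⟨ρ, Or.inr hρ, hσ⟩

lemma Iq_insSet (b : ℕ) (W : Set (QState l)) : Iq b (insSet W) = insSet (Iq b W) := by
  induction b with
  | zero => rfl
  | succ b ih => rw [Iq_succ, ih, Iq_succ]

lemma Iq_add (b c : ℕ) (X : Set (QState l)) : Iq (b + c) X = Iq b (Iq c X) := by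
  induction b with
  | zero => simp [Nat.zero_add]
  | succ b ih => rw [Nat.succ_add, Iq_succ, ih, Iq_succ]

lemma Dq_add (a b : ℕ) (X : Set (QState l)) : Dq (a + b) X = Dq a (Dq b X) := by
  induction a with
  | zero => simp [Nat.zero_add]
  | succ a ih => rw [Nat.succ_add, Dq_succ, ih, Dq_succ]

/-- one deletion past one insertion -/
lemma delSet_insSet (Z : Set (QState l)) : delSet (insSet Z) ⊆ Z ∪ insSet (delSet Z) := by
  intro τ hτ
  obtain ⟨σ, hσ, hτσ⟩ := mem_delSet.1 hτ
  obtain ⟨ρ, hρ, hσρ⟩ := mem_insSet.1 hσ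
  obtain ⟨hσd, hρσ⟩ := hσρ
  rcases del1_comm hρσ hτσ with rfl | ⟨τ', hτ'ρ, hτ'τ⟩
  · exact Or.inl hρ
  · refine Or.inr (mem_insSet.2 ⟨τ', mem_delSet.2 ⟨ρ, hρ, hτ'ρ⟩, ?_, hτ'τ⟩)
    exact (mem_del1 hτσ).2 hσd

/-- `a+1` deletions past one insertion -/
lemma Dq_succ_insSet (a : ℕ) (Z : Set (QState l)) :
    Dq (a + 1) (insSet Z) ⊆ insSet (Dq (a + 1) Z) ∪ Dq a Z := by
  induction a with
  | zero =>
    intro τ hτ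
    rcases delSet_insSet Z hτ with h | h
    · exact Or.inr h
    · exact Or.inl h
  | succ a ih =>
    intro τ hτ
    have h1 : τ ∈ delSet (insSet (Dq (a + 1) Z) ∪ Dq a Z) :=
      delSet_mono ih hτ
    rw [delSet_union] at h1
    rcases h1 with h1 | h1
    · rcases delSet_insSet (Dq (a + 1) Z) h1 with h2 | h2
      · exact Or.inr h2
      · exact Or.inl h2
    · exact Or.inr h1

/-- padding: density states with at least one qudit can be deleted then reinserted -/
lemma subset_insSet_delSet {Z : Set (QState l)}
    (hZ : ∀ σ ∈ Z, IsDensityS σ ∧ 1 ≤ σ.1) : Z ⊆ insSet (delSet Z) := by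
  intro ρ hρ
  obtain ⟨hd, h1⟩ := hZ ρ hρ
  obtain ⟨m, M⟩ := ρ
  cases m with
  | zero => exact absurd h1 (by simp)
  | succ m =>
    refine mem_insSet.2 ⟨⟨m, traceOut 0 M⟩, mem_delSet.2 ⟨⟨m + 1, M⟩, hρ, ⟨0, rfl⟩⟩,
      hd, ⟨0, rfl⟩⟩

lemma Dq_spec {n : ℕ} {X : Set (QState l)}
    (hX : ∀ ρ ∈ X, ρ.1 = n ∧ IsDensityS ρ) (s : ℕ) :
    ∀ ρ ∈ Dq s X, ρ.1 = n - s ∧ IsDensityS ρ := by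
  induction s with
  | zero => simpa using hX
  | succ s ih =>
    intro ρ hρ
    obtain ⟨σ, hσ, hρσ⟩ := mem_delSet.1 hρ
    obtain ⟨hσ1, hσ2⟩ := ih σ hσ
    obtain ⟨he, hd⟩ := mem_del1 hρσ
    refine ⟨?_, hd hσ2⟩
    omega

/-- deletions commute past insertions, on sets of density states -/
lemma Dq_Iq {m : ℕ} {Z : Set (QState l)}
    (hZ : ∀ σ ∈ Z, σ.1 = m ∧ IsDensityS σ) :
    ∀ b a, a ≤ m → Dq a (Iq b Z) ⊆ Iq b (Dq a Z) := by
  intro b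
  induction b with
  | zero => intro a _; exact subset_rfl
  | succ b ih =>
    intro a ha
    cases a with
    | zero => exact subset_rfl
    | succ a =>
      rw [Iq_succ]
      have step1 : Dq (a + 1) (insSet (Iq b Z)) ⊆
          insSet (Dq (a + 1) (Iq b Z)) ∪ Dq a (Iq b Z) := Dq_succ_insSet _ _
      have step2 : insSet (Dq (a + 1) (Iq b Z)) ⊆ insSet (Iq b (Dq (a + 1) Z)) :=
        insSet_mono (ih (a + 1) ha)
      have step3 : Dq a (Iq b Z) ⊆ Iq b (Dq a Z) := ih a (Nat.le_of_succ_le ha)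
      have pad : Dq a Z ⊆ insSet (delSet (Dq a Z)) := by
        apply subset_insSet_delSet
        intro σ hσ
        obtain ⟨h1, h2⟩ := Dq_spec (fun ρ hρ => (hZ ρ hρ)) a σ hσ
        exact ⟨h2, by omega⟩
      have step4 : Iq b (Dq a Z) ⊆ Iq b (insSet (delSet (Dq a Z))) := Iq_mono b pad
      intro τ hτ
      rcases step1 hτ with h | h
      · exact step2 h
      · have h2 := step4 (step3 h)
        rw [show insSet (delSet (Dq a Z)) = insSet (Dq (a + 1) Z) from rfl,
          Iq_insSet] at h2
        exact h2

end AuxSets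
lemma compDI_aux {l n : ℕ} (X : Set (QState l)) (hX : ∀ ρ ∈ X, ρ.1 = n ∧ IsDensityS ρ) :
    ∀ L : List (ℕ × ℕ), (L.map Prod.fst).sum ≤ n →
      compDI L X ⊆ Iq (L.map Prod.snd).sum (Dq (L.map Prod.fst).sum X) := by
  intro L
  induction L with
  | nil => intro _; exact subset_rfl
  | cons st L' ih =>
    intro hsn
    simp only [List.map_cons, List.sum_cons] at hsn ⊢
    have hS' : (L'.map Prod.fst).sum ≤ n := le_trans (Nat.le_add_left _ _) hsn
    have h1 := ih hS'
    have hZ := Dq_spec hX (L'.map Prod.fst).sum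
    have hcomm : Dq st.1 (Iq (L'.map Prod.snd).sum (Dq (L'.map Prod.fst).sum X))
        ⊆ Iq (L'.map Prod.snd).sum (Dq st.1 (Dq (L'.map Prod.fst).sum X)) :=
      Dq_Iq hZ _ st.1 (by omega)
    show Iq st.2 (Dq st.1 (compDI L' X)) ⊆ _
    calc Iq st.2 (Dq st.1 (compDI L' X))
        ⊆ Iq st.2 (Dq st.1 (Iq (L'.map Prod.snd).sum (Dq (L'.map Prod.fst).sum X))) :=
          Iq_mono _ (Dq_mono _ h1)
      _ ⊆ Iq st.2 (Iq (L'.map Prod.snd).sum (Dq st.1 (Dq (L'.map Prod.fst).sum X))) :=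
          Iq_mono _ hcomm
      _ = Iq (st.2 + (L'.map Prod.snd).sum) (Dq (st.1 + (L'.map Prod.fst).sum) X) := by
          rw [Iq_add, Dq_add]
/-- Any finite composition of deletion and insertion errors with `s` deletions
and `t` insertions in total is contained in `I^t ∘ D^s`. -/
theorem compDI_subset_ins_dels {l n s t : ℕ} (hsn : s ≤ n)
    (X : Set (QState l)) (hX : ∀ ρ ∈ X, ρ.1 = n ∧ IsDensityS ρ)
    (L : List (ℕ × ℕ))
    (hs : (L.map Prod.fst).sum = s) (ht : (L.map Prod.snd).sum = t) :
    compDI L X ⊆ Iq t (Dq s X) := by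
  subst hs ht
  exact compDI_aux X hX L hsn
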